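/- Let g : Y → ℝ ∪ {∞} be proper l.s.c. convex, K : X → Y linear, x̄ with ȳ ∈ ∂g(Kx̄). If z ∈ T_{∂g*(ȳ)}(Kx̄), then z lies in the normal cone N_{∂g(Kx̄)}(ȳ), i.e., ⟨z, y − ȳ⟩ ≤ 0 for all y ∈ ∂g(Kx̄). Equivalently, T_{∂g*(ȳ)}(Kx̄) ⊆ N_{∂g(Kx̄)}(ȳ). -/

import Mathlib

open Filter Topology Metric Set
open scoped RealInnerProductSpace NNReal ENNReal

noncomputable section

/-- Bouligand (contingent) tangent cone. -/
def tanCone {G : Type*} [AddCommGroup G] [Module ℝ G] [TopologicalSpace G]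
    (s : Set G) (x : G) : Set G :=
  {w | ∃ (t : ℕ → ℝ) (wk : ℕ → G), (∀ n, 0 < t n) ∧
    Tendsto t atTop (𝓝 0) ∧ Tendsto wk atTop (𝓝 w) ∧ ∀ n, x + t n • wk n ∈ s}

variable {E F : Type*} [NormedAddCommGroup E] [InnerProductSpace ℝ E]
  [NormedAddCommGroup F] [InnerProductSpace ℝ F]

/-- Graph of a set-valued mapping. -/
def gph (S : E → Set F) : Set (E × F) := {p | p.2 ∈ S p.1}

/-- Graphical derivative. -/
def gder (S : E → Set F) (x : E) (y : F) (w : E) : Set F :=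
  {z | (w, z) ∈ tanCone (gph S) (x, y)}

/-- Local closedness of the graph around a point. -/
def LocallyClosedGraph (S : E → Set F) (x : E) (y : F) : Prop :=
  ∃ U ∈ 𝓝 ((x, y) : E × F), IsClosed (U ∩ gph S)

/-- Metric subregularity of a set-valued mapping at `x` for `y`. -/
def MetrSubreg (S : E → Set F) (x : E) (y : F) : Prop :=
  ∃ κ : ℝ≥0, ∃ ε : ℝ, 0 < ε ∧ ∀ x' ∈ ball x ε,
    EMetric.infEdist x' {u | y ∈ S u} ≤ (κ : ℝ≥0∞) * EMetric.infEdist y (S x')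

/-- Convex subdifferential of an extended-real-valued function. -/
def subdiff (φ : E → EReal) (x : E) : Set E :=
  {v | ∀ u, φ x + ((⟪v, u - x⟫ : ℝ) : EReal) ≤ φ u}

/-- Properness. -/
def ProperFn (φ : E → EReal) : Prop := (∀ x, φ x ≠ ⊥) ∧ ∃ x, φ x ≠ ⊤

/-- Convexity via the epigraph. -/
def ConvexFn (φ : E → EReal) : Prop := Convex ℝ {p : E × ℝ | φ p.1 ≤ (p.2 : EReal)}

/-- Fenchel conjugate. -/
def conjFn (φ : E → EReal) (v : E) : EReal := ⨆ x, ((⟪v, x⟫ : ℝ) : EReal) - φ x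

/-- Second subderivative. -/
def secondSubderiv (φ : E → EReal) (x v w : E) : EReal :=
  Filter.liminf (fun p : ℝ × E =>
    (((2 / p.1 ^ 2 : ℝ)) : EReal) *
      (φ (x + p.1 • p.2) - φ x - ((p.1 * ⟪v, p.2⟫ : ℝ) : EReal)))
    ((𝓝[>] (0 : ℝ)) ×ˢ 𝓝 w)

/-- Quadratic growth condition at `x` for `v`. -/
def QuadGrowth (φ : E → EReal) (x v : E) : Prop :=
  ∃ c : ℝ, 0 < c ∧ ∃ ε : ℝ, 0 < ε ∧ ∀ u ∈ ball x ε,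
    φ x + ((⟪v, u - x⟫ + c / 2 * (infDist u {u' | v ∈ subdiff φ u'}) ^ 2 : ℝ) : EReal) ≤ φ u


/-- `T_{∂g*(yb)}(Kxb) ⊆ N_{∂g(Kxb)}(yb)`. -/
theorem stmt16 {E F : Type*} [NormedAddCommGroup E] [InnerProductSpace ℝ E]
    [NormedAddCommGroup F] [InnerProductSpace ℝ F]
    [FiniteDimensional ℝ E] [FiniteDimensional ℝ F]
    (g : F → EReal) (hproper : ProperFn g) (hlsc : LowerSemicontinuous g)
    (hconv : ConvexFn g) (K : E →ₗ[ℝ] F) (xb : E) (yb : F)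
    (hyb : yb ∈ subdiff g (K xb)) (z : F)
    (hz : z ∈ tanCone (subdiff (conjFn g) yb) (K xb)) :
    ∀ y ∈ subdiff g (K xb), ⟪z, y - yb⟫ ≤ 0 := by
  intro y hy
  obtain ⟨t, wk, ht0, htlim, hwlim, hmem⟩ := hz
  -- g (K xb) is finite
  have hbot : g (K xb) ≠ ⊥ := hproper.1 (K xb)
  have htop : g (K xb) ≠ ⊤ := by
    intro h
    obtain ⟨x0, hx0⟩ := hproper.2
    have h1 := hyb x0
    rw [h] at h1
    rw [EReal.top_add_of_ne_bot (by simp)] at h1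
    exact hx0 (top_le_iff.mp h1)
  set r : ℝ := (g (K xb)).toReal with hrdef
  have hr : (r : EReal) = g (K xb) := EReal.coe_toReal htop hbot
  -- lower bound on conjFn g yb
  have hA : ((⟪yb, K xb⟫ - r : ℝ) : EReal) ≤ conjFn g yb := by
    have := le_iSup (fun x => ((⟪yb, x⟫ : ℝ) : EReal) - g x) (K xb)
    rwa [← hr, ← EReal.coe_sub] at this
  -- upper bound on conjFn g y
  have hB : conjFn g y ≤ ((⟪y, K xb⟫ - r : ℝ) : EReal) := by
    apply iSup_le
    intro x
    have h1 := hy x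
    rw [← hr] at h1
    have h2 : ((r + ⟪y, x - K xb⟫ : ℝ) : EReal) ≤ g x := by
      rw [EReal.coe_add]; exact h1
    calc ((⟪y, x⟫ : ℝ) : EReal) - g x
        ≤ ((⟪y, x⟫ : ℝ) : EReal) - ((r + ⟪y, x - K xb⟫ : ℝ) : EReal) :=
          EReal.sub_le_sub le_rfl h2
      _ = ((⟪y, x⟫ - (r + ⟪y, x - K xb⟫) : ℝ) : EReal) := by rw [EReal.coe_sub]
      _ = ((⟪y, K xb⟫ - r : ℝ) : EReal) := by
          congr 1
          rw [inner_sub_right]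
          ring
  -- for each n, the subgradient inequality for conjFn
  have key : ∀ n, ⟪wk n, y - yb⟫ ≤ 0 := by
    intro n
    have hmn := hmem n y
    have hchain : ((⟪yb, K xb⟫ - r : ℝ) : EReal) + ((⟪K xb + t n • wk n, y - yb⟫ : ℝ) : EReal)
        ≤ ((⟪y, K xb⟫ - r : ℝ) : EReal) :=
      le_trans (add_le_add hA le_rfl) (le_trans hmn hB)
    rw [← EReal.coe_add, EReal.coe_le_coe_iff] at hchain
    have hexp : ⟪K xb + t n • wk n, y - yb⟫ =
        ⟪K xb, y - yb⟫ + t n * ⟪wk n, y - yb⟫ := by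
      rw [inner_add_left, real_inner_smul_left]
    have hsym : ⟪K xb, y - yb⟫ = ⟪y, K xb⟫ - ⟪yb, K xb⟫ := by
      rw [inner_sub_right, real_inner_comm (K xb) y, real_inner_comm (K xb) yb]
    rw [hexp, hsym] at hchain
    have ht : 0 < t n := ht0 n
    nlinarith
  -- pass to the limit
  have hcont : Tendsto (fun n => ⟪wk n, y - yb⟫) atTop (𝓝 ⟪z, y - yb⟫) :=
    hwlim.inner tendsto_const_nhds
  exact le_of_tendsto hcont (Filter.Eventually.of_forall key)


end
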